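/- There is an absolute constant C > 0 such that the following holds. Let f be a homogeneous polynomial of degree d in n real variables all of whose coefficients are nonnegative, with multilinear components {f_{2α}}. Then for every multi-index α with |α| ≤ d/2, ‖f‖₂ ≥ ‖f_{2α}‖₂ / ( C^d · |𝒪(α)| ). -/

import Mathlib

open MvPolynomial

/-- `‖f‖₂ = sup_{‖x‖₂ = 1} |f(x)|` for a polynomial `f` in `n` real variables. -/
noncomputable def sphereNorm {n : ℕ} (f : MvPolynomial (Fin n) ℝ) : ℝ :=
  sSup {y | ∃ x : Fin n → ℝ, (∑ i, x i ^ 2) = 1 ∧ y = |eval x f|}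


/-- A polynomial is multilinear if every variable appears with degree at most 1
in every monomial with nonzero coefficient. -/
def IsMultilinear {n : ℕ} (p : MvPolynomial (Fin n) ℝ) : Prop :=
  ∀ m ∈ p.support, ∀ i, m i ≤ 1

/-- `|α| = Σᵢ αᵢ`, the total degree of the multi-index `α`. -/
def mdeg {n : ℕ} (α : Fin n →₀ ℕ) : ℕ := α.sum fun _ e => e

/-- `g` is the multilinear decomposition of the degree-`d` homogeneous polynomial `f`,
i.e. `f = Σ_{|α| ≤ d/2} g α · x^{2α}` where each `g α` is multilinear and homogeneous
of degree `d - 2|α|`. -/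
def IsMLDecomp {n : ℕ} (d : ℕ) (f : MvPolynomial (Fin n) ℝ)
    (g : (Fin n →₀ ℕ) → MvPolynomial (Fin n) ℝ) : Prop :=
  (∀ α : Fin n →₀ ℕ,
      (mdeg α ≤ d / 2 → IsMultilinear (g α) ∧ (g α).IsHomogeneous (d - 2 * mdeg α)) ∧
      (d / 2 < mdeg α → g α = 0)) ∧
  f = ∑ᶠ α : Fin n →₀ ℕ, g α * monomial (2 • α) (1 : ℝ)

/-- `|𝒪(α)| = |α|! / ∏ᵢ αᵢ!`, the number of tuples corresponding to `α`. -/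
noncomputable def orbitCard {n : ℕ} (α : Fin n →₀ ℕ) : ℝ :=
  (Nat.factorial (mdeg α) : ℝ) / α.prod fun _ e => (Nat.factorial e : ℝ)

namespace StmtAux

variable {n : ℕ}

lemma mdeg_eq_sum (α : Fin n →₀ ℕ) : mdeg α = ∑ i, α i := by
  rw [mdeg, Finsupp.sum_fintype]
  intro i; rfl

lemma apply_le_mdeg (α : Fin n →₀ ℕ) (i : Fin n) : α i ≤ mdeg α := by
  rw [mdeg_eq_sum]
  exact Finset.single_le_sum (f := fun j => α j) (fun j _ => Nat.zero_le _) (Finset.mem_univ i)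

lemma mdeg_finite (N : ℕ) : {α : Fin n →₀ ℕ | mdeg α ≤ N}.Finite := by
  have h : {α : Fin n →₀ ℕ | mdeg α ≤ N} ⊆
      Set.Iic (Finsupp.equivFunOnFinite.symm fun _ => N) := by
    intro α hα
    rw [Set.mem_Iic, Finsupp.le_def]
    intro i
    simpa using (apply_le_mdeg α i).trans hα
  exact (Set.finite_Iic _).subset h

lemma eval_nonneg {p : MvPolynomial (Fin n) ℝ} (hp : ∀ m, 0 ≤ coeff m p)
    {x : Fin n → ℝ} (hx : ∀ i, 0 ≤ x i) : 0 ≤ eval x p := by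
  rw [eval_eq]
  exact Finset.sum_nonneg fun m _ => mul_nonneg (hp m)
    (Finset.prod_nonneg fun i _ => pow_nonneg (hx i) _)

lemma abs_eval_le {p : MvPolynomial (Fin n) ℝ} (hp : ∀ m, 0 ≤ coeff m p)
    (x : Fin n → ℝ) : |eval x p| ≤ eval (fun i => |x i|) p := by
  rw [eval_eq, eval_eq]
  refine (Finset.abs_sum_le_sum_abs _ _).trans (Finset.sum_le_sum fun m _ => ?_)
  rw [abs_mul, abs_of_nonneg (hp m), Finset.abs_prod]
  exact le_of_eq (by rw [Finset.prod_congr rfl fun i _ => abs_pow _ _])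

lemma eval_scale {p : MvPolynomial (Fin n) ℝ} (hp : ∀ m, 0 ≤ coeff m p)
    {d : ℕ} (hdeg : ∀ m ∈ p.support, mdeg m ≤ d)
    {c : ℝ} (hc0 : 0 ≤ c) (hc1 : c ≤ 1) {x z : Fin n → ℝ} (hx : ∀ i, 0 ≤ x i)
    (hz : ∀ i, c * x i ≤ z i) : c ^ d * eval x p ≤ eval z p := by
  rw [eval_eq', eval_eq', Finset.mul_sum]
  refine Finset.sum_le_sum fun m hm => ?_
  rw [mul_left_comm]
  refine mul_le_mul_of_nonneg_left ?_ (hp m)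
  calc c ^ d * ∏ i, x i ^ m i
      ≤ c ^ (∑ i, m i) * ∏ i, x i ^ m i := by
        refine mul_le_mul_of_nonneg_right (pow_le_pow_of_le_one hc0 hc1 ?_)
          (Finset.prod_nonneg fun i _ => pow_nonneg (hx i) _)
        rw [← mdeg_eq_sum]; exact hdeg m hm
    _ = ∏ i, (c * x i) ^ m i := by
        rw [← Finset.prod_pow_eq_pow_sum, ← Finset.prod_mul_distrib]
        exact Finset.prod_congr rfl fun i _ => (mul_pow _ _ _).symm
    _ ≤ ∏ i, z i ^ m i :=
        Finset.prod_le_prod (fun i _ => pow_nonneg (mul_nonneg hc0 (hx i)) _)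
          (fun i _ => pow_le_pow_left₀ (mul_nonneg hc0 (hx i)) (hz i) _)

section decomp

variable {d : ℕ} {f : MvPolynomial (Fin n) ℝ} {g : (Fin n →₀ ℕ) → MvPolynomial (Fin n) ℝ}
  (hD : IsMLDecomp d f g)

include hD

lemma f_eq_sum (s : Finset (Fin n →₀ ℕ)) :
    f = ∑ α ∈ (mdeg_finite (n := n) (d / 2)).toFinset ∪ s,
      g α * monomial (2 • α) (1 : ℝ) := by
  rw [hD.2]
  refine finsum_eq_sum_of_support_subset _ ?_
  intro α hα
  simp only [Finset.coe_union, Set.Finite.coe_toFinset]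
  left
  by_contra h
  rw [Set.mem_setOf_eq, not_le] at h
  exact hα (by simp only [(hD.1 α).2 h, zero_mul])

lemma coeff_g_eq (α : Fin n →₀ ℕ) (hα : mdeg α ≤ d / 2)
    {β : Fin n →₀ ℕ} (hβ : β ∈ (g α).support) :
    coeff β (g α) = coeff (β + 2 • α) f := by
  classical
  rw [f_eq_sum hD {α}, coeff_sum]
  have hmem : α ∈ (mdeg_finite (n := n) (d / 2)).toFinset ∪ {α} :=
    Finset.mem_union_right _ (Finset.mem_singleton_self α)
  rw [Finset.sum_eq_single_of_mem α hmem]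
  · rw [coeff_mul_monomial' _ _ _ _, if_pos le_add_self, add_tsub_cancel_right, mul_one]
  · intro α' _ hne
    rw [coeff_mul_monomial' _ _ _ _]
    split_ifs with hle
    · rw [mul_one]
      by_contra hne0
      have hγ : (β + 2 • α - 2 • α') ∈ (g α').support := mem_support_iff.2 hne0
      have hα' : mdeg α' ≤ d / 2 := by
        by_contra h
        rw [not_le] at h
        rw [(hD.1 α').2 h] at hγ
        simp at hγ
      have hml' := ((hD.1 α').1 hα').1 _ hγ
      have hml := ((hD.1 α).1 hα).1 _ hβ
      apply hne
      ext i
      have h1 := hml' i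
      have h2 := hml i
      have h3 : (2 • α') i ≤ (β + 2 • α) i := Finsupp.le_def.1 hle i
      have h4 : (β + 2 • α - 2 • α') i = (β + 2 • α) i - (2 • α') i :=
        Finsupp.tsub_apply _ _ _
      rw [h4] at h1
      simp only [Finsupp.add_apply, Finsupp.smul_apply, smul_eq_mul] at h1 h3
      omega
    · rfl

lemma coeff_g_nonneg (hf : ∀ m, 0 ≤ coeff m f) (α : Fin n →₀ ℕ) :
    ∀ m, 0 ≤ coeff m (g α) := by
  intro m
  by_cases hm : m ∈ (g α).support
  · by_cases hα : mdeg α ≤ d / 2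
    · rw [coeff_g_eq hD α hα hm]; exact hf _
    · rw [not_le] at hα
      rw [(hD.1 α).2 hα]
      simp
  · rw [notMem_support_iff.1 hm]

lemma eval_f_ge (hgpos : ∀ α' m, 0 ≤ coeff m (g α')) (α : Fin n →₀ ℕ)
    {z : Fin n → ℝ} (hz : ∀ i, 0 ≤ z i) :
    eval z (g α) * eval z (monomial (2 • α) (1 : ℝ)) ≤ eval z f := by
  classical
  rw [f_eq_sum hD {α}, map_sum]
  have hmem : α ∈ (mdeg_finite (n := n) (d / 2)).toFinset ∪ {α} :=
    Finset.mem_union_right _ (Finset.mem_singleton_self α)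
  have h := Finset.single_le_sum
    (f := fun α' => eval z (g α' * monomial (2 • α') (1 : ℝ))) ?_ hmem
  · simpa only [map_mul] using h
  · intro α' _
    simp only [map_mul]
    refine mul_nonneg (eval_nonneg (hgpos α') hz) ?_
    rw [eval_monomial, one_mul, Finsupp.prod]
    exact Finset.prod_nonneg fun i _ => pow_nonneg (hz i) _

end decomp

lemma bddAbove_sphere (f : MvPolynomial (Fin n) ℝ) :
    BddAbove {y | ∃ x : Fin n → ℝ, (∑ i, x i ^ 2) = 1 ∧ y = |eval x f|} := by
  have hset : {y | ∃ x : Fin n → ℝ, (∑ i, x i ^ 2) = 1 ∧ y = |eval x f|} =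
      (fun x : Fin n → ℝ => |eval x f|) '' {x : Fin n → ℝ | ∑ i, x i ^ 2 = 1} := by
    ext y
    constructor
    · rintro ⟨x, hx, rfl⟩; exact ⟨x, hx, rfl⟩
    · rintro ⟨x, hx, rfl⟩; exact ⟨x, hx, rfl⟩
  rw [hset]
  have hclosed : IsClosed {x : Fin n → ℝ | ∑ i, x i ^ 2 = 1} :=
    isClosed_eq (by continuity) continuous_const
  have hbdd : Bornology.IsBounded {x : Fin n → ℝ | ∑ i, x i ^ 2 = 1} := by
    rw [Metric.isBounded_iff_subset_closedBall 0]
    refine ⟨1, fun x hx => ?_⟩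
    rw [Metric.mem_closedBall, dist_zero_right]
    rw [pi_norm_le_iff_of_nonneg zero_le_one]
    intro i
    have h1 : x i ^ 2 ≤ 1 := by
      rw [← hx]
      exact Finset.single_le_sum (fun j _ => sq_nonneg (x j)) (Finset.mem_univ i)
    rw [Real.norm_eq_abs]
    nlinarith [sq_abs (x i), abs_nonneg (x i)]
  have hcpt : IsCompact {x : Fin n → ℝ | ∑ i, x i ^ 2 = 1} :=
    Metric.isCompact_of_isClosed_isBounded hclosed hbdd
  exact (hcpt.image (continuous_abs.comp (f.continuous_eval))).bddAbove

lemma le_sphereNorm (f : MvPolynomial (Fin n) ℝ) {x : Fin n → ℝ}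
    (hx : (∑ i, x i ^ 2) = 1) : eval x f ≤ sphereNorm f :=
  (le_abs_self _).trans (le_csSup (bddAbove_sphere f) ⟨x, hx, rfl⟩)

lemma sphereNorm_nonneg (f : MvPolynomial (Fin n) ℝ) : 0 ≤ sphereNorm f := by
  rcases Set.eq_empty_or_nonempty
      {y | ∃ x : Fin n → ℝ, (∑ i, x i ^ 2) = 1 ∧ y = |eval x f|} with h | ⟨y, hy⟩
  · rw [sphereNorm, h, Real.sSup_empty]
  · obtain ⟨x, hx, rfl⟩ := hy
    exact (abs_nonneg _).trans (le_csSup (bddAbove_sphere f) ⟨x, hx, rfl⟩)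

lemma factorial_aux (k : ℕ) : (k : ℝ) ^ k ≤ 3 ^ k * k.factorial := by
  have h1 : (k : ℝ) ^ k / k.factorial ≤ Real.exp k := by
    refine le_trans ?_ (Real.sum_le_exp_of_nonneg (Nat.cast_nonneg k) (k + 1))
    refine Finset.single_le_sum (f := fun i => (k : ℝ) ^ i / i.factorial) ?_
      (Finset.self_mem_range_succ k)
    intro i _
    positivity
  have h2 : Real.exp k ≤ 3 ^ k := by
    calc Real.exp k = Real.exp 1 ^ k := by
          rw [← Real.exp_nat_mul, mul_one]
      _ ≤ 3 ^ k := pow_le_pow_left₀ (Real.exp_pos 1).le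
          (Real.exp_one_lt_d9.le.trans (by norm_num)) k
  have hfac : (0 : ℝ) < k.factorial := by positivity
  rw [div_le_iff₀ hfac] at h1
  calc (k : ℝ) ^ k ≤ Real.exp k * k.factorial := h1
    _ ≤ 3 ^ k * k.factorial := mul_le_mul_of_nonneg_right h2 hfac.le

lemma orbitCard_pos (α : Fin n →₀ ℕ) : 0 < orbitCard α := by
  rw [orbitCard]
  refine div_pos (by positivity) ?_
  rw [Finsupp.prod]
  exact Finset.prod_pos fun i _ => by positivity

lemma monomial_lower (α : Fin n →₀ ℕ) (hk : mdeg α ≠ 0) :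
    (1 / 6 : ℝ) ^ mdeg α / orbitCard α ≤
      ∏ i ∈ α.support, ((α i : ℝ) / (2 * mdeg α)) ^ α i := by
  set k := mdeg α with hkdef
  have hsum : ∑ i ∈ α.support, α i = k := rfl
  have hkpos : (0 : ℝ) < k := by positivity
  have hRHS : ∏ i ∈ α.support, ((α i : ℝ) / (2 * k)) ^ α i
      = (∏ i ∈ α.support, (α i : ℝ) ^ α i) / (2 * k) ^ k := by
    rw [← hsum, ← Finset.prod_pow_eq_pow_sum, ← Finset.prod_div_distrib]
    exact Finset.prod_congr rfl fun i _ => (div_pow _ _ _)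
  have hOC : orbitCard α = (k.factorial : ℝ) / ∏ i ∈ α.support, ((α i).factorial : ℝ) := by
    rw [orbitCard, Finsupp.prod]
  rw [hRHS, hOC]
  have hfacprod : (0 : ℝ) < ∏ i ∈ α.support, ((α i).factorial : ℝ) :=
    Finset.prod_pos fun i _ => by positivity
  have hkfac : (0 : ℝ) < k.factorial := by positivity
  have hP : (0 : ℝ) ≤ ∏ i ∈ α.support, (α i : ℝ) ^ α i :=
    Finset.prod_nonneg fun i _ => by positivity
  have hF_le_P : (∏ i ∈ α.support, ((α i).factorial : ℝ)) ≤
      ∏ i ∈ α.support, (α i : ℝ) ^ α i := by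
    refine Finset.prod_le_prod (fun i _ => by positivity) (fun i _ => ?_)
    exact_mod_cast Nat.cast_le.2 (Nat.factorial_le_pow (α i))
  have hmix : (1 / 6 : ℝ) ^ k * (2 * k) ^ k ≤ k.factorial := by
    rw [← mul_pow]
    have he : (1 / 6 : ℝ) * (2 * k) = k / 3 := by ring
    rw [he, div_pow, div_le_iff₀ (by positivity)]
    linarith [factorial_aux k]
  rw [div_div_eq_mul_div, div_le_div_iff₀ hkfac (by positivity)]
  calc (1 / 6 : ℝ) ^ k * (∏ i ∈ α.support, ((α i).factorial : ℝ)) * (2 * k) ^ k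
      = (∏ i ∈ α.support, ((α i).factorial : ℝ)) * ((1 / 6 : ℝ) ^ k * (2 * k) ^ k) := by ring
    _ ≤ (∏ i ∈ α.support, ((α i).factorial : ℝ)) * k.factorial :=
        mul_le_mul_of_nonneg_left hmix hfacprod.le
    _ ≤ (∏ i ∈ α.support, (α i : ℝ) ^ α i) * k.factorial :=
        mul_le_mul_of_nonneg_right hF_le_P hkfac.le

end StmtAux

theorem stmt7 : ∃ C : ℝ, C > 0 ∧
    ∀ (n d : ℕ) (f : MvPolynomial (Fin n) ℝ)
      (g : (Fin n →₀ ℕ) → MvPolynomial (Fin n) ℝ),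
      f.IsHomogeneous d → (∀ m, 0 ≤ coeff m f) → IsMLDecomp d f g →
      ∀ α : Fin n →₀ ℕ, mdeg α ≤ d / 2 →
        sphereNorm (g α) / (C ^ d * orbitCard α) ≤ sphereNorm f := by
  refine ⟨4, by norm_num, ?_⟩
  intro n d f g hhom hf hD α hα
  have hK : 0 < orbitCard α := StmtAux.orbitCard_pos α
  have hN : 0 ≤ sphereNorm f := StmtAux.sphereNorm_nonneg f
  rw [div_le_iff₀ (by positivity)]
  refine Real.sSup_le ?_ (by positivity)
  rintro y ⟨x, hx, rfl⟩
  have hgpos : ∀ α' m, 0 ≤ coeff m (g α') := fun α' => StmtAux.coeff_g_nonneg hD hf α'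
  have hy0 : (0 : ℝ) ≤ |eval x (g α)| := abs_nonneg _
  have habs : |eval x (g α)| ≤ eval (fun i => |x i|) (g α) :=
    StmtAux.abs_eval_le (hgpos α) x
  by_cases hk0 : mdeg α = 0
  · -- α = 0
    have hα0 : α = 0 := by
      ext i
      simp only [Finsupp.coe_zero, Pi.zero_apply]
      have := StmtAux.apply_le_mdeg α i
      omega
    have hOC : orbitCard α = 1 := by
      subst hα0
      simp [orbitCard, mdeg]
    have ha2 : ∑ i, |x i| ^ 2 = 1 := by
      simp only [sq_abs]; exact hx
    have hFz : eval (fun i => |x i|) (g α) * eval (fun i => |x i|) (monomial (2 • α) (1 : ℝ))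
        ≤ eval (fun i => |x i|) f :=
      StmtAux.eval_f_ge hD hgpos α (fun i => abs_nonneg _)
    have hmon1 : eval (fun i => |x i|) (monomial (2 • α) (1 : ℝ)) = 1 := by
      subst hα0
      simp
    rw [hmon1, mul_one] at hFz
    have hT : eval (fun i => |x i|) f ≤ sphereNorm f := StmtAux.le_sphereNorm f ha2
    rw [hOC, mul_one]
    calc |eval x (g α)| ≤ sphereNorm f := habs.trans (hFz.trans hT)
      _ ≤ sphereNorm f * 4 ^ d := le_mul_of_one_le_right hN (one_le_pow₀ (by norm_num))
  · -- k > 0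
    set k := mdeg α with hkdef
    set c : ℝ := (Real.sqrt 2)⁻¹ with hcdef
    have hs2 : Real.sqrt 2 * Real.sqrt 2 = 2 := Real.mul_self_sqrt (by norm_num)
    have hs2pos : 0 < Real.sqrt 2 := Real.sqrt_pos.2 (by norm_num)
    have hs2one : (1 : ℝ) ≤ Real.sqrt 2 := by nlinarith
    have hc0 : (0 : ℝ) ≤ c := by positivity
    have hc1 : c ≤ 1 := inv_le_one_of_one_le₀ hs2one
    have hkpos : (0 : ℝ) < k := by
      have : 0 < k := Nat.pos_of_ne_zero hk0
      exact_mod_cast this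
    set z : Fin n → ℝ := fun i => Real.sqrt ((x i ^ 2 + α i / k) / 2) with hzdef
    have hz0 : ∀ i, 0 ≤ z i := fun i => Real.sqrt_nonneg _
    have hzsq : ∀ i, z i ^ 2 = (x i ^ 2 + α i / k) / 2 := fun i =>
      Real.sq_sqrt (by positivity)
    have hasum : ∑ i, (α i : ℝ) = k := by
      rw [hkdef, StmtAux.mdeg_eq_sum]
      push_cast
      rfl
    have hzsum : ∑ i, z i ^ 2 = 1 := by
      simp only [hzsq]
      rw [← Finset.sum_div, Finset.sum_add_distrib, hx, ← Finset.sum_div, hasum,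
        div_self hkpos.ne']
      norm_num
    have hczx : ∀ i, c * |x i| ≤ z i := by
      intro i
      have h1 : c * |x i| = Real.sqrt (x i ^ 2 / 2) := by
        rw [Real.sqrt_div (sq_nonneg _), Real.sqrt_sq_eq_abs, hcdef]
        rw [div_eq_mul_inv, mul_comm]
      rw [h1]
      refine Real.sqrt_le_sqrt ?_
      have : (0 : ℝ) ≤ (α i : ℝ) / k := by positivity
      linarith [this]
    -- degree bound for g α
    have hhomg := ((hD.1 α).1 hα).2
    have hdeg : ∀ m ∈ (g α).support, mdeg m ≤ d := by
      intro m hm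
      have h := hhomg (mem_support_iff.1 hm)
      have hmd : mdeg m = (Finsupp.weight 1) m := by
        rw [Finsupp.weight_apply]
        simp only [mdeg, Pi.one_apply, smul_eq_mul, mul_one]
      rw [hmd, h]
      omega
    have hscale : c ^ d * eval (fun i => |x i|) (g α) ≤ eval z (g α) :=
      StmtAux.eval_scale (hgpos α) hdeg hc0 hc1 (fun i => abs_nonneg _) hczx
    have hFz : eval z (g α) * eval z (monomial (2 • α) (1 : ℝ)) ≤ eval z f :=
      StmtAux.eval_f_ge hD hgpos α hz0
    have hT : eval z f ≤ sphereNorm f := StmtAux.le_sphereNorm f hzsum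
    -- monomial lower bound
    have hM : eval z (monomial (2 • α) (1 : ℝ)) = ∏ i ∈ α.support, (z i ^ 2) ^ α i := by
      rw [eval_monomial, one_mul, Finsupp.prod, Finsupp.support_smul_eq two_ne_zero]
      refine Finset.prod_congr rfl fun i _ => ?_
      rw [Finsupp.smul_apply, smul_eq_mul, pow_mul]
    have hz2 : ∀ i ∈ α.support, ((α i : ℝ) / (2 * k)) ≤ z i ^ 2 := by
      intro i _
      rw [hzsq]
      have h0 : (0 : ℝ) ≤ x i ^ 2 := sq_nonneg _
      have he : (α i : ℝ) / (2 * k) = (0 + (α i : ℝ) / k) / 2 := by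
        rw [zero_add, div_div, mul_comm]
      rw [he]
      gcongr
    have hMge : (1 / 6 : ℝ) ^ k / orbitCard α ≤ eval z (monomial (2 • α) (1 : ℝ)) := by
      rw [hM]
      refine (StmtAux.monomial_lower α hk0).trans ?_
      refine Finset.prod_le_prod (fun i _ => by positivity) (fun i hi => ?_)
      exact pow_le_pow_left₀ (by positivity) (hz2 i hi) _
    -- combine
    have hE1 : (0 : ℝ) ≤ eval (fun i => |x i|) (g α) := hy0.trans habs
    have hE2 : (0 : ℝ) ≤ eval z (g α) := StmtAux.eval_nonneg (hgpos α) hz0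
    have hS0 : (0 : ℝ) ≤ c ^ d * ((1 / 6 : ℝ) ^ k / orbitCard α) := by positivity
    have hfinal : |eval x (g α)| * (c ^ d * ((1 / 6 : ℝ) ^ k / orbitCard α)) ≤ sphereNorm f := by
      calc |eval x (g α)| * (c ^ d * ((1 / 6 : ℝ) ^ k / orbitCard α))
          ≤ eval (fun i => |x i|) (g α) * (c ^ d * ((1 / 6 : ℝ) ^ k / orbitCard α)) :=
            mul_le_mul_of_nonneg_right habs hS0
        _ = (c ^ d * eval (fun i => |x i|) (g α)) * ((1 / 6 : ℝ) ^ k / orbitCard α) := by ring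
        _ ≤ eval z (g α) * ((1 / 6 : ℝ) ^ k / orbitCard α) :=
            mul_le_mul_of_nonneg_right hscale (by positivity)
        _ ≤ eval z (g α) * eval z (monomial (2 • α) (1 : ℝ)) :=
            mul_le_mul_of_nonneg_left hMge hE2
        _ ≤ eval z f := hFz
        _ ≤ sphereNorm f := hT
    have hcoef : (1 : ℝ) ≤ (4 : ℝ) ^ d * orbitCard α * (c ^ d * ((1 / 6 : ℝ) ^ k / orbitCard α)) := by
      have hsimp : (4 : ℝ) ^ d * orbitCard α * (c ^ d * ((1 / 6 : ℝ) ^ k / orbitCard α))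
          = (4 * c) ^ d * (1 / 6 : ℝ) ^ k := by
        rw [mul_pow]
        field_simp
      rw [hsimp]
      have h4c : (4 : ℝ) * c = 2 * Real.sqrt 2 := by
        rw [hcdef]
        rw [mul_comm, inv_mul_eq_div, div_eq_iff hs2pos.ne']
        nlinarith
      rw [h4c]
      have h16 : ((1 : ℝ) / 6) ^ k = ((6 : ℝ) ^ k)⁻¹ := by
        rw [one_div, inv_pow]
      rw [h16, ← div_eq_mul_inv, le_div_iff₀ (by positivity), one_mul]
      have h8 : ((2 : ℝ) * Real.sqrt 2) ^ 2 = 8 := by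
        rw [mul_pow, Real.sq_sqrt (by norm_num : (0:ℝ) ≤ 2)]
        norm_num
      have h2k : 2 * k ≤ d := by omega
      calc (6 : ℝ) ^ k ≤ 8 ^ k := pow_le_pow_left₀ (by norm_num) (by norm_num) k
        _ = ((2 * Real.sqrt 2) ^ 2) ^ k := by rw [h8]
        _ = (2 * Real.sqrt 2) ^ (2 * k) := by rw [← pow_mul]
        _ ≤ (2 * Real.sqrt 2) ^ d := pow_le_pow_right₀ (by nlinarith) h2k
    calc |eval x (g α)| = |eval x (g α)| * 1 := (mul_one _).symm
      _ ≤ |eval x (g α)| * ((4 : ℝ) ^ d * orbitCard α * (c ^ d * ((1 / 6 : ℝ) ^ k / orbitCard α))) :=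
          mul_le_mul_of_nonneg_left hcoef hy0
      _ = ((4 : ℝ) ^ d * orbitCard α) * (|eval x (g α)| * (c ^ d * ((1 / 6 : ℝ) ^ k / orbitCard α))) := by
          ring
      _ ≤ ((4 : ℝ) ^ d * orbitCard α) * sphereNorm f :=
          mul_le_mul_of_nonneg_left hfinal (by positivity)
      _ = sphereNorm f * (4 ^ d * orbitCard α) := by ring
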